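/- Let N be a positive integer and let D be a strictly upper triangular N×N matrix over a field F with D² = 0. Then there exists an invertible upper triangular N×N matrix P and an involution τ of {1,…,N} such that P D P⁻¹ = A_τ, where A_τ is the matrix whose (i,j) entry is 1 if i < τ(i) = j and 0 otherwise. -/

import Mathlib

section helpers
variable {F : Type} [Field F] {N : ℕ}

open Classical in
/-- Columns of a triangular family with nonzero diagonal are linearly independent. -/
lemma tri_indep (q : Fin N → Fin N → F)
    (htri : ∀ k i : Fin N, k < i → q k i = 0) (hdiag : ∀ k, q k k ≠ 0)
    (g : Fin N → F) (hg : ∑ k, g k • q k = 0) : ∀ k, g k = 0 := by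
  by_contra h
  push_neg at h
  obtain ⟨k0, hk0⟩ := h
  set S : Finset (Fin N) := Finset.univ.filter (fun k => g k ≠ 0) with hS
  have hSne : S.Nonempty := ⟨k0, by simp [hS, hk0]⟩
  set i := S.max' hSne with hi
  have hiS : i ∈ S := S.max'_mem hSne
  have hgi : g i ≠ 0 := by simpa [hS] using hiS
  have hmax : ∀ k, g k ≠ 0 → k ≤ i := fun k hk => S.le_max' k (by simp [hS, hk])
  have hcf := congrFun hg i
  rw [Finset.sum_apply] at hcf
  have hsum : ∑ k, (g k • q k) i = (g i • q i) i := by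
    refine Finset.sum_eq_single i (fun m _ hm => ?_) (by simp)
    rcases lt_or_gt_of_ne hm with h1 | h1
    · simp [htri m i h1]
    · have : g m = 0 := by
        by_contra hgm; exact absurd (hmax m hgm) (not_le.mpr h1)
      simp [this]
  rw [hsum] at hcf
  have : g i = 0 ∨ q i i = 0 := by simpa [smul_eq_mul, mul_eq_zero] using hcf
  rcases this with h | h
  · exact hgi h
  · exact hdiag i h

/-- Any vector supported on indices `< j` is a combination of the first `j` columns. -/
lemma tri_solve (q : Fin N → Fin N → F)
    (htri : ∀ k i : Fin N, k < i → q k i = 0) (hdiag : ∀ k, q k k ≠ 0) :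
    ∀ j : ℕ, j ≤ N → ∀ v : Fin N → F, (∀ i : Fin N, ¬((i : ℕ) < j) → v i = 0) →
      ∃ c : Fin N → F, (∀ k : Fin N, ¬((k : ℕ) < j) → c k = 0) ∧ v = ∑ k, c k • q k := by
  intro j
  induction j with
  | zero =>
    intro _ v hv
    refine ⟨0, fun k _ => rfl, ?_⟩
    funext i
    simp [hv i (by omega)]
  | succ j ih =>
    intro hjN v hv
    have hjN' : j < N := hjN
    set jF : Fin N := ⟨j, hjN'⟩ with hjF
    set a : F := v jF / q jF jF with ha
    set v' : Fin N → F := v - a • q jF with hv'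
    have hv'0 : ∀ i : Fin N, ¬((i : ℕ) < j) → v' i = 0 := by
      intro i hi
      by_cases hij : (i : ℕ) = j
      · have : i = jF := Fin.ext hij
        subst this
        simp [hv', ha, div_mul_cancel₀ _ (hdiag jF)]
      · have h1 : ¬((i : ℕ) < j + 1) := by omega
        have h2 : jF < i := by
          rw [Fin.lt_def]; simp only [hjF]; omega
        simp [hv', hv i h1, htri jF i h2]
    obtain ⟨c', hc'0, hc'⟩ := ih (by omega) v' hv'0
    refine ⟨fun k => if k = jF then a else c' k, ?_, ?_⟩
    · intro k hk
      have h1 : k ≠ jF := by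
        intro h; subst h; simp [hjF] at hk
      have h2 : ¬((k : ℕ) < j) := by omega
      simp [h1, hc'0 k h2]
    · have hcoef : ∀ k : Fin N, (if k = jF then a else c' k) = c' k + (if k = jF then a else 0) := by
        intro k
        by_cases hk : k = jF
        · subst hk; simp [hc'0 jF (by simp [hjF])]
        · simp [hk]
      have hsplit : ∑ k, (if k = jF then a else c' k) • q k
          = (∑ k, c' k • q k) + a • q jF := by
        rw [Finset.sum_congr rfl (fun k _ => by rw [hcoef k, add_smul])]
        rw [Finset.sum_add_distrib]
        congr 1
        rw [Finset.sum_congr rfl (fun (k : Fin N) _ => by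
          show (if k = jF then a else 0) • q k = if k = jF then a • q k else 0
          split <;> simp)]
        simp
      rw [hsplit, ← hc']
      funext i
      simp [hv']
end helpers

open Classical in
open Matrix in
lemma barannikov_aux {F : Type} [Field F] {N : ℕ}
    (D : Matrix (Fin N) (Fin N) F)
    (hupper : ∀ i j : Fin N, j ≤ i → D i j = 0)
    (hD2 : D * D = 0) :
    ∀ j : ℕ, j ≤ N →
    ∃ (q : Fin N → Fin N → F) (τ : Fin N → Fin N),
      (∀ k, τ (τ k) = k) ∧
      (∀ k : Fin N, j ≤ (k : ℕ) → τ k = k ∧ q k = Pi.single k 1) ∧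
      (∀ k i : Fin N, k < i → q k i = 0) ∧
      (∀ k, q k k ≠ 0) ∧
      (∀ k : Fin N, (k : ℕ) < j →
        D *ᵥ q k = if ((τ k : ℕ) < (k : ℕ)) then q (τ k) else 0) := by
  intro j
  induction j with
  | zero =>
    intro _
    refine ⟨fun k => Pi.single k 1, id, fun k => rfl, fun k _ => ⟨rfl, rfl⟩, ?_, ?_, ?_⟩
    · intro k i hki
      exact Pi.single_eq_of_ne (Fin.ne_of_gt hki) 1
    · intro k; simp
    · intro k hk; omega
  | succ j ih =>
    intro hjN
    obtain ⟨q, τ, hτ2, hup, htri, hdiag, hrel⟩ := ih (by omega)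
    have hjN' : j < N := hjN
    set jF : Fin N := ⟨j, hjN'⟩ with hjF
    have hτjF : τ jF = jF := (hup jF (le_refl j)).1
    have hqjF : q jF = Pi.single jF 1 := (hup jF (le_refl j)).2
    -- τ maps {< j} into {< j}
    have hτj : ∀ k : Fin N, (k : ℕ) < j → (τ k : ℕ) < j := by
      intro k hk
      by_contra h
      push_neg at h
      have h1 : τ (τ k) = τ k := (hup (τ k) h).1
      rw [hτ2] at h1
      have := congrArg Fin.val h1
      omega
    -- the new column of D
    set v : Fin N → F := D *ᵥ q jF with hv
    have hv0 : ∀ i : Fin N, ¬((i : ℕ) < j) → v i = 0 := by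
      intro i hi
      have : v i = D i jF := by
        simp [hv, hqjF, Matrix.mulVec, dotProduct, Pi.single_apply]
      rw [this]
      refine hupper i jF (Fin.le_def.mpr ?_)
      simp only [hjF]
      omega
    obtain ⟨c, hc0, hcv⟩ := tri_solve q htri hdiag j (by omega) v hv0
    -- D v = 0
    have hDv : D *ᵥ v = 0 := by
      rw [hv, Matrix.mulVec_mulVec, hD2, Matrix.zero_mulVec]
    -- linearity
    have hlin : ∀ (d : Fin N → F) (u : Fin N → Fin N → F),
        D *ᵥ (∑ k, d k • u k) = ∑ k, d k • (D *ᵥ u k) := by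
      intro d u
      rw [← Matrix.mulVecLin_apply, map_sum]
      exact Finset.sum_congr rfl fun k _ => by rw [_root_.map_smul, Matrix.mulVecLin_apply]
    have sum1 : ∑ k, (if (τ k : ℕ) < (k : ℕ) then c k • q (τ k) else 0) = 0 := by
      have h0 : ∑ k, c k • (D *ᵥ q k) = 0 := by rw [← hlin, ← hcv, hDv]
      refine Eq.trans (Finset.sum_congr rfl fun k _ => ?_) h0
      by_cases hk : (k : ℕ) < j
      · rw [hrel k hk]
        split <;> simp
      · rw [hc0 k hk]
        simp
    -- reindex by the involution
    have sum2 : ∑ k : Fin N, (if (k : ℕ) < (τ k : ℕ) then c (τ k) else 0) • q k = 0 := by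
      have he := Equiv.sum_comp (Function.Involutive.toPerm τ hτ2)
        (fun k => if (τ k : ℕ) < (k : ℕ) then c k • q (τ k) else 0)
      rw [sum1] at he
      refine Eq.trans (Finset.sum_congr rfl fun k _ => ?_) he
      show _ = (if (τ (τ k) : ℕ) < (τ k : ℕ) then c (τ k) • q (τ (τ k)) else 0)
      simp only [hτ2]
      split <;> simp
    have hcdeath : ∀ k : Fin N, (τ k : ℕ) < (k : ℕ) → c k = 0 := by
      intro m hm
      have := tri_indep q htri hdiag _ sum2 (τ m)
      rw [hτ2] at this
      simpa [hm] using this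
    -- corrected new column
    set b : Fin N → F := fun k => if (k : ℕ) < (τ k : ℕ) then c k else 0 with hb
    set qj' : Fin N → F := Pi.single jF 1 - ∑ k, b k • q (τ k) with hqj'
    set c'' : Fin N → F := fun k => if τ k = k then c k else 0 with hc''
    have hc''top : ∀ k : Fin N, ¬((k : ℕ) < j) → c'' k = 0 := by
      intro k hk; simp [hc'', hc0 k hk]
    have hbsupp : ∀ k : Fin N, b k ≠ 0 → (k : ℕ) < (τ k : ℕ) ∧ (k : ℕ) < j ∧ (τ k : ℕ) < j := by
      intro k hk
      have h1 : (k : ℕ) < (τ k : ℕ) := by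
        by_contra h
        exact hk (by simp only [hb]; rw [if_neg h])
      have h2 : (k : ℕ) < j := by
        by_contra h
        apply hk
        simp only [hb]
        rw [hc0 k h]
        simp
      exact ⟨h1, h2, hτj k h2⟩
    have hDqj' : D *ᵥ qj' = ∑ k, c'' k • q k := by
      have e1 : D *ᵥ qj' = v - ∑ k, b k • (D *ᵥ q (τ k)) := by
        rw [hqj', ← hqjF, Matrix.mulVec_sub, ← hv, hlin]
      have e2 : ∑ k, b k • (D *ᵥ q (τ k)) = ∑ k, b k • q k := by
        refine Finset.sum_congr rfl fun k _ => ?_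
        by_cases hbk : b k = 0
        · simp [hbk]
        · obtain ⟨h1, h2, h3⟩ := hbsupp k hbk
          rw [hrel (τ k) h3, if_pos (by rw [hτ2]; exact h1), hτ2]
      rw [e1, e2, hcv, ← Finset.sum_sub_distrib]
      refine Finset.sum_congr rfl fun k _ => ?_
      rw [← sub_smul]
      congr 1
      rcases lt_trichotomy ((τ k : ℕ)) ((k : ℕ)) with h | h | h
      · have hck : c k = 0 := hcdeath k h
        have hbk : b k = 0 := by simp only [hb]; rw [if_neg (by omega)]
        have hck'' : c'' k = 0 := by
          simp only [hc'']
          rw [if_neg (fun hh => by rw [hh] at h; omega)]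
        rw [hck, hbk, hck'']; ring
      · have hτk : τ k = k := Fin.ext h
        have hbk : b k = 0 := by simp only [hb]; rw [if_neg (by omega)]
        have hck'' : c'' k = c k := by simp only [hc'']; rw [if_pos hτk]
        rw [hbk, hck'']; ring
      · have hbk : b k = c k := by simp only [hb]; rw [if_pos h]
        have hck'' : c'' k = 0 := by
          simp only [hc'']
          rw [if_neg (fun hh => by rw [hh] at h; omega)]
        rw [hbk, hck'']; ring
    have hqj'hi : ∀ i : Fin N, jF < i → qj' i = 0 := by
      intro i hi
      have hij : (j : ℕ) < (i : ℕ) := by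
        have := Fin.lt_def.mp hi; simpa [hjF] using this
      simp only [hqj', Pi.sub_apply, Finset.sum_apply]
      rw [Pi.single_eq_of_ne (Fin.ne_of_val_ne (by simp [hjF]; omega)) 1]
      rw [Finset.sum_eq_zero fun k _ => ?_]
      · ring
      · by_cases hbk : b k = 0
        · simp [hbk]
        · obtain ⟨h1, h2, h3⟩ := hbsupp k hbk
          have : q (τ k) i = 0 := htri (τ k) i (Fin.lt_def.mpr (by omega))
          simp [this]
    have hqj'diag : qj' jF = 1 := by
      simp only [hqj', Pi.sub_apply, Finset.sum_apply]
      rw [Pi.single_eq_same]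
      rw [Finset.sum_eq_zero fun k _ => ?_]
      · ring
      · by_cases hbk : b k = 0
        · simp [hbk]
        · obtain ⟨h1, h2, h3⟩ := hbsupp k hbk
          have : q (τ k) jF = 0 := htri (τ k) jF (Fin.lt_def.mpr (by simp [hjF]; omega))
          simp [this]
    by_cases hAB : ∀ k, c'' k = 0
    · -- Case A: the new column reduces to zero; it stays unpaired.
      refine ⟨Function.update q jF qj', τ, hτ2, ?_, ?_, ?_, ?_⟩
      · intro k hk
        have hne : k ≠ jF := Fin.ne_of_val_ne (by simp [hjF]; omega)
        refine ⟨(hup k (by omega)).1, ?_⟩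
        rw [Function.update_of_ne hne]
        exact (hup k (by omega)).2
      · intro k i hki
        by_cases hk : k = jF
        · subst hk; rw [Function.update_self]; exact hqj'hi i hki
        · rw [Function.update_of_ne hk]; exact htri k i hki
      · intro k
        by_cases hk : k = jF
        · subst hk; rw [Function.update_self, hqj'diag]; exact one_ne_zero
        · rw [Function.update_of_ne hk]; exact hdiag k
      · intro k hk
        by_cases hkj : k = jF
        · subst hkj
          rw [Function.update_self, hτjF, if_neg (lt_irrefl _), hDqj']
          exact Finset.sum_eq_zero fun m _ => by rw [hAB m]; simp
        · have hkj' : (k : ℕ) < j := by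
            have : (k : ℕ) ≠ j := fun h => hkj (Fin.ext (by simp [hjF]; omega))
            omega
          have hτne : τ k ≠ jF := by
            intro h
            exact hkj (by rw [← hτ2 k, h, hτjF])
          rw [Function.update_of_ne hkj, Function.update_of_ne hτne]
          exact hrel k hkj'
    · -- Case B: pair the new column with the largest remaining coefficient.
      push_neg at hAB
      obtain ⟨k0, hk0⟩ := hAB
      set S : Finset (Fin N) := Finset.univ.filter (fun k => c'' k ≠ 0) with hS
      have hSne : S.Nonempty := ⟨k0, by simp [hS, hk0]⟩
      set i := S.max' hSne with hidef
      have hi_ne : c'' i ≠ 0 := by simpa [hS] using S.max'_mem hSne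
      have himax : ∀ k, c'' k ≠ 0 → k ≤ i := fun k hk => S.le_max' k (by simp [hS, hk])
      have hτi : τ i = i := by
        by_contra h
        exact hi_ne (by simp only [hc'']; rw [if_neg h])
      have hij : (i : ℕ) < j := by
        by_contra h
        exact hi_ne (hc''top i h)
      have hine : i ≠ jF := Fin.ne_of_val_ne (by simp [hjF]; omega)
      set w : Fin N → F := ∑ k, c'' k • q k with hw_def
      set qi : Fin N → F := (c'' i)⁻¹ • w with hqi_def
      set qjn : Fin N → F := (c'' i)⁻¹ • qj' with hqjn_def
      set q' : Fin N → Fin N → F := Function.update (Function.update q jF qjn) i qi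
        with hq'_def
      set τ' : Fin N → Fin N := fun k => if k = i then jF else if k = jF then i else τ k
        with hτ'_def
      have hq'i : q' i = qi := by rw [hq'_def]; exact Function.update_self _ _ _
      have hq'j : q' jF = qjn := by
        rw [hq'_def, Function.update_of_ne hine.symm]
        exact Function.update_self _ _ _
      have hq'o : ∀ k, k ≠ i → k ≠ jF → q' k = q k := by
        intro k h1 h2
        rw [hq'_def, Function.update_of_ne h1, Function.update_of_ne h2]
      have hτ'i : τ' i = jF := by rw [hτ'_def]; simp
      have hτ'j : τ' jF = i := by rw [hτ'_def]; simp [hine.symm]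
      have hτ'o : ∀ k, k ≠ i → k ≠ jF → τ' k = τ k := by
        intro k h1 h2
        rw [hτ'_def]; simp [h1, h2]
      have hwhi : ∀ i' : Fin N, i < i' → w i' = 0 := by
        intro i' h
        rw [hw_def, Finset.sum_apply]
        refine Finset.sum_eq_zero fun m _ => ?_
        by_cases hm : c'' m = 0
        · simp [hm]
        · have h1 : m ≤ i := himax m hm
          have : q m i' = 0 := htri m i' (lt_of_le_of_lt h1 h)
          simp [this]
      have hwi : w i = c'' i * q i i := by
        rw [hw_def, Finset.sum_apply]
        refine Finset.sum_eq_single i (fun m _ hm => ?_) (by simp)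
        rcases lt_or_gt_of_ne hm with h1 | h1
        · simp [htri m i h1]
        · have : c'' m = 0 := by
            by_contra hmm; exact absurd (himax m hmm) (not_le.mpr h1)
          simp [this]
      have hDw : D *ᵥ w = 0 := by
        rw [← hDqj', Matrix.mulVec_mulVec, hD2, Matrix.zero_mulVec]
      refine ⟨q', τ', ?_, ?_, ?_, ?_, ?_⟩
      · -- involution
        intro k
        by_cases h1 : k = i
        · subst h1; rw [hτ'i, hτ'j]
        · by_cases h2 : k = jF
          · subst h2; rw [hτ'j, hτ'i]
          · rw [hτ'o k h1 h2]
            have hτk1 : τ k ≠ i := fun h => h1 (by rw [← hτ2 k, h, hτi])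
            have hτk2 : τ k ≠ jF := fun h => h2 (by rw [← hτ2 k, h, hτjF])
            rw [hτ'o _ hτk1 hτk2, hτ2]
      · -- untouched part
        intro k hk
        have h1 : k ≠ i := Fin.ne_of_val_ne (by omega)
        have h2 : k ≠ jF := Fin.ne_of_val_ne (by simp [hjF]; omega)
        refine ⟨?_, ?_⟩
        · rw [hτ'o k h1 h2]; exact (hup k (by omega)).1
        · rw [hq'o k h1 h2]; exact (hup k (by omega)).2
      · -- triangularity
        intro k i' hki'
        by_cases h1 : k = i
        · subst h1
          rw [hq'i, hqi_def, Pi.smul_apply, hwhi i' hki', smul_zero]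
        · by_cases h2 : k = jF
          · subst h2
            rw [hq'j, hqjn_def, Pi.smul_apply, hqj'hi i' hki', smul_zero]
          · rw [hq'o k h1 h2]; exact htri k i' hki'
      · -- nonzero diagonal
        intro k
        by_cases h1 : k = i
        · subst h1
          rw [hq'i, hqi_def, Pi.smul_apply, hwi, smul_eq_mul, ← mul_assoc,
            inv_mul_cancel₀ hi_ne, one_mul]
          exact hdiag i
        · by_cases h2 : k = jF
          · subst h2
            rw [hq'j, hqjn_def, Pi.smul_apply, hqj'diag, smul_eq_mul, mul_one]
            exact inv_ne_zero hi_ne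
          · rw [hq'o k h1 h2]; exact hdiag k
      · -- the differential relations
        intro k hk
        by_cases h1 : k = i
        · subst h1
          rw [hq'i, hτ'i, if_neg (by simp [hjF]; omega), hqi_def,
            Matrix.mulVec_smul, hDw, smul_zero]
        · by_cases h2 : k = jF
          · subst h2
            rw [hq'j, hτ'j, if_pos (show (i : ℕ) < (jF : ℕ) by simp [hjF]; omega),
              hq'i, hqjn_def, Matrix.mulVec_smul, hDqj', hqi_def]
          · have hkj' : (k : ℕ) < j := by
              have : (k : ℕ) ≠ j := fun h => h2 (Fin.ext (by simp [hjF]; omega))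
              omega
            have hτk1 : τ k ≠ i := fun h => h1 (by rw [← hτ2 k, h, hτi])
            have hτk2 : τ k ≠ jF := fun h => h2 (by rw [← hτ2 k, h, hτjF])
            rw [hq'o k h1 h2, hτ'o k h1 h2, hq'o (τ k) hτk1 hτk2]
            exact hrel k hkj'

/-- The canonical matrix `A_τ` of an involution `τ` of `{1,…,N}`:
entry `(i,j)` is `1` if `i < τ i = j` and `0` otherwise. -/
def Amat (F : Type) [Field F] {N : ℕ} (τ : Fin N → Fin N) : Matrix (Fin N) (Fin N) F :=
  Matrix.of fun i j => if i < τ i ∧ τ i = j then 1 else 0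

open Matrix in
/-- Barannikov canonical form (existence): any strictly upper triangular square-zero
matrix over a field is conjugate, by an invertible upper triangular matrix,
to `A_τ` for some involution `τ`. -/
theorem barannikov_existence (F : Type) [Field F] (N : ℕ) (hN : 0 < N)
    (D : Matrix (Fin N) (Fin N) F)
    (hupper : ∀ i j : Fin N, j ≤ i → D i j = 0)
    (hD2 : D * D = 0) :
    ∃ (P : Matrix (Fin N) (Fin N) F) (τ : Fin N → Fin N),
      IsUnit P ∧ P.BlockTriangular id ∧ τ ∘ τ = id ∧
        P * D * P⁻¹ = Amat F τ := by
  obtain ⟨q, τ, hτ2, -, htri, hdiag, hrel⟩ := barannikov_aux D hupper hD2 N (le_refl N)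
  have hrel' : ∀ k : Fin N, D *ᵥ q k = if ((τ k : ℕ) < (k : ℕ)) then q (τ k) else 0 :=
    fun k => hrel k k.isLt
  set Q : Matrix (Fin N) (Fin N) F := Matrix.of fun i k => q k i with hQ
  have hQtri : Q.BlockTriangular id := by
    intro i k h
    exact htri k i h
  have hQdet : IsUnit Q.det := by
    rw [Matrix.det_of_upperTriangular hQtri]
    exact (Finset.prod_ne_zero_iff.mpr fun k _ => hdiag k).isUnit
  have key : D * Q = Q * Amat F τ := by
    ext i k
    have lhs : (D * Q) i k = (D *ᵥ q k) i := by
      simp [Matrix.mul_apply, Matrix.mulVec, dotProduct, hQ]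
    rw [lhs, hrel' k]
    rw [Matrix.mul_apply]
    by_cases h : (τ k : ℕ) < (k : ℕ)
    · rw [if_pos h]
      have hsingle : ∑ m, Q i m * Amat F τ m k = Q i (τ k) * Amat F τ (τ k) k := by
        refine Finset.sum_eq_single (τ k) (fun m _ hm => ?_)
          (fun h => absurd (Finset.mem_univ _) h)
        have : ¬(m < τ m ∧ τ m = k) := by
          rintro ⟨h1, h2⟩
          exact hm (by rw [← h2, hτ2])
        simp [Amat, this]
      rw [hsingle]
      have hcond : τ k < τ (τ k) ∧ τ (τ k) = k := by
        refine ⟨?_, hτ2 k⟩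
        rw [hτ2]
        exact Fin.lt_def.mpr h
      simp only [Amat, hcond, and_self, if_true, Matrix.of_apply, hQ, mul_one]
      simp [Fin.lt_def, h]
    · rw [if_neg h]
      refine (Finset.sum_eq_zero fun m _ => ?_).symm
      have : ¬(m < τ m ∧ τ m = k) := by
        rintro ⟨h1, h2⟩
        have : m = τ k := by rw [← h2, hτ2]
        subst this
        rw [hτ2] at h1
        exact h (Fin.lt_def.mp h1)
      simp [Amat, this]
  refine ⟨Q⁻¹, τ, ?_, ?_, ?_, ?_⟩
  · exact Matrix.isUnit_nonsing_inv_iff.mpr ((Matrix.isUnit_iff_isUnit_det Q).mpr hQdet)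
  · haveI := Q.invertibleOfIsUnitDet hQdet
    exact Matrix.blockTriangular_inv_of_blockTriangular hQtri
  · funext k; exact hτ2 k
  · rw [Matrix.nonsing_inv_nonsing_inv Q hQdet, Matrix.mul_assoc, key, ← Matrix.mul_assoc,
      Matrix.nonsing_inv_mul Q hQdet, Matrix.one_mul]
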